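/- The formulas Δ(K) = K ⊗ K, Δ(K^{-1}) = K^{-1} ⊗ K^{-1}, Δ(E) = E ⊗ 1 + K ⊗ E, Δ(F) = 1 ⊗ F + F ⊗ K^{-1} extend uniquely to a superalgebra homomorphism Δ: U → U ⊗ U, where the multiplication on U ⊗ U is the super (graded) multiplication (x⊗y)(x'⊗y') = t^{2 p(y) p(x')} x x' ⊗ y y'. -/

import Mathlib

noncomputable section

/-- The defining relations of the quantum superalgebra `U` of `osp(1|2)`:
generators `E = ι 0`, `F = ι 1`, `K = ι 2`, `K⁻¹ = ι 3`, with
`KK⁻¹ = K⁻¹K = 1`, `KE = v²t⁻² EK`, `KF = v⁻²t² FK`,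
`EF − t² FE = (K − K⁻¹)/(v − v⁻¹)`. -/
inductive URel (F : Type) [Field F] (v t : F) :
    FreeAlgebra F (Fin 4) → FreeAlgebra F (Fin 4) → Prop
  | KKinv : URel F v t (FreeAlgebra.ι F (2 : Fin 4) * FreeAlgebra.ι F (3 : Fin 4)) 1
  | KinvK : URel F v t (FreeAlgebra.ι F (3 : Fin 4) * FreeAlgebra.ι F (2 : Fin 4)) 1
  | KE : URel F v t (FreeAlgebra.ι F (2 : Fin 4) * FreeAlgebra.ι F (0 : Fin 4))
      ((v ^ 2 / t ^ 2) • (FreeAlgebra.ι F (0 : Fin 4) * FreeAlgebra.ι F (2 : Fin 4)))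
  | KF : URel F v t (FreeAlgebra.ι F (2 : Fin 4) * FreeAlgebra.ι F (1 : Fin 4))
      ((t ^ 2 / v ^ 2) • (FreeAlgebra.ι F (1 : Fin 4) * FreeAlgebra.ι F (2 : Fin 4)))
  | EF : URel F v t (FreeAlgebra.ι F (0 : Fin 4) * FreeAlgebra.ι F (1 : Fin 4)
        - t ^ 2 • (FreeAlgebra.ι F (1 : Fin 4) * FreeAlgebra.ι F (0 : Fin 4)))
      ((v - v⁻¹)⁻¹ • (FreeAlgebra.ι F (2 : Fin 4) - FreeAlgebra.ι F (3 : Fin 4)))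

/-- The quantum superalgebra `U` of `osp(1|2)`, presented by generators and relations. -/
abbrev Uosp (F : Type) [Field F] (v t : F) := RingQuot (URel F v t)

/-- The generator `E` of `U`. -/
def UE (F : Type) [Field F] (v t : F) : Uosp F v t :=
  RingQuot.mkAlgHom F (URel F v t) (FreeAlgebra.ι F (0 : Fin 4))

/-- The generator `F` of `U`. -/
def UF (F : Type) [Field F] (v t : F) : Uosp F v t :=
  RingQuot.mkAlgHom F (URel F v t) (FreeAlgebra.ι F (1 : Fin 4))

/-- The generator `K` of `U`. -/
def UK (F : Type) [Field F] (v t : F) : Uosp F v t :=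
  RingQuot.mkAlgHom F (URel F v t) (FreeAlgebra.ι F (2 : Fin 4))

/-- The generator `K⁻¹` of `U`. -/
def UKinv (F : Type) [Field F] (v t : F) : Uosp F v t :=
  RingQuot.mkAlgHom F (URel F v t) (FreeAlgebra.ι F (3 : Fin 4))

/-- the formulas `Δ(K) = K ⊗ K`, `Δ(K⁻¹) = K⁻¹ ⊗ K⁻¹`,
`Δ(E) = E ⊗ 1 + K ⊗ E`, `Δ(F) = 1 ⊗ F + F ⊗ K⁻¹` extend uniquely to a superalgebra
homomorphism `Δ : U → U ⊗ U`, where `U ⊗ U` carries the super multiplication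
`(x⊗y)(x'⊗y') = t^(2 p(y) p(x')) xx' ⊗ yy'` for homogeneous elements.  Here the super
tensor product is modelled by an algebra `T` with a bilinear map `tmul` (playing the role
of `⊗`) satisfying that rule, where homogeneity of parity `a` is expressed through the
parity involution `σ` of `U` (the algebra automorphism with `σE = −E`, `σF = −F`,
`σK^{±1} = K^{±1}`): an element `x` is homogeneous of parity `a` iff `σ x = (−1)^a • x`. -/
theorem comultiplication_exists_unique (F : Type) [Field F] (v t : F)
    (ht : t ^ 2 = -1) (hv : v ≠ 0)
    (T : Type) [Ring T] [Algebra F T]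
    (tmul : Uosp F v t →ₗ[F] Uosp F v t →ₗ[F] T)
    (σ : Uosp F v t →ₐ[F] Uosp F v t)
    (hσE : σ (UE F v t) = - UE F v t) (hσF : σ (UF F v t) = - UF F v t)
    (hσK : σ (UK F v t) = UK F v t) (hσKinv : σ (UKinv F v t) = UKinv F v t)
    (hone : tmul 1 1 = 1)
    (hmul : ∀ (x x' y y' : Uosp F v t) (a b : ℕ),
      σ y = ((-1 : F) ^ a) • y → σ x' = ((-1 : F) ^ b) • x' →
      tmul x y * tmul x' y' = (t ^ (2 * (a * b))) • tmul (x * x') (y * y')) :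
    ∃! Δ : Uosp F v t →ₐ[F] T,
      Δ (UK F v t) = tmul (UK F v t) (UK F v t) ∧
      Δ (UKinv F v t) = tmul (UKinv F v t) (UKinv F v t) ∧
      Δ (UE F v t) = tmul (UE F v t) 1 + tmul (UK F v t) (UE F v t) ∧
      Δ (UF F v t) = tmul 1 (UF F v t) + tmul (UF F v t) (UKinv F v t) := by
  have ht0 : t ^ 2 ≠ 0 := by rw [ht]; exact neg_ne_zero.mpr one_ne_zero
  have hv2 : v ^ 2 ≠ 0 := pow_ne_zero 2 hv
  -- parities of generators
  have pone : σ (1 : Uosp F v t) = ((-1 : F) ^ 0) • 1 := by simp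
  have pE : σ (UE F v t) = ((-1 : F) ^ 1) • UE F v t := by
    rw [hσE, pow_one]; exact (neg_one_smul F _).symm
  have pF : σ (UF F v t) = ((-1 : F) ^ 1) • UF F v t := by
    rw [hσF, pow_one]; exact (neg_one_smul F _).symm
  have pK : σ (UK F v t) = ((-1 : F) ^ 0) • UK F v t := by simp [hσK]
  have pKinv : σ (UKinv F v t) = ((-1 : F) ^ 0) • UKinv F v t := by simp [hσKinv]
  -- relations in U
  have hKK : UK F v t * UKinv F v t = 1 := by
    simpa [UK, UKinv, map_mul] using RingQuot.mkAlgHom_rel F (URel.KKinv (F := F) (v := v) (t := t))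
  have hKinvK : UKinv F v t * UK F v t = 1 := by
    simpa [UK, UKinv, map_mul] using RingQuot.mkAlgHom_rel F (URel.KinvK (F := F) (v := v) (t := t))
  have hKE : UK F v t * UE F v t = (v ^ 2 / t ^ 2) • (UE F v t * UK F v t) := by
    simpa [UK, UE, map_mul, map_smul] using RingQuot.mkAlgHom_rel F (URel.KE (F := F) (v := v) (t := t))
  have hKF : UK F v t * UF F v t = (t ^ 2 / v ^ 2) • (UF F v t * UK F v t) := by
    simpa [UK, UF, map_mul, map_smul] using RingQuot.mkAlgHom_rel F (URel.KF (F := F) (v := v) (t := t))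
  have hEF : UE F v t * UF F v t - t ^ 2 • (UF F v t * UE F v t)
      = (v - v⁻¹)⁻¹ • (UK F v t - UKinv F v t) := by
    simpa [UE, UF, UK, UKinv, map_mul, map_smul, map_sub] using
      RingQuot.mkAlgHom_rel F (URel.EF (F := F) (v := v) (t := t))
  have hEF' : UE F v t * UF F v t = t ^ 2 • (UF F v t * UE F v t)
      + (v - v⁻¹)⁻¹ • (UK F v t - UKinv F v t) := by
    rw [← hEF]; abel
  -- derived relation K⁻¹ E = (t²/v²) • E K⁻¹
  have hEK : UE F v t * UK F v t = (t ^ 2 / v ^ 2) • (UK F v t * UE F v t) := by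
    rw [hKE, smul_smul]
    have : t ^ 2 / v ^ 2 * (v ^ 2 / t ^ 2) = 1 := by
      rw [div_mul_div_comm, mul_comm (t ^ 2), div_self (mul_ne_zero hv2 ht0)]
    rw [this, one_smul]
  have hKinvE : UKinv F v t * UE F v t = (t ^ 2 / v ^ 2) • (UE F v t * UKinv F v t) := by
    calc UKinv F v t * UE F v t
        = UKinv F v t * (UE F v t * UK F v t) * UKinv F v t := by
          rw [mul_assoc, mul_assoc, hKK, mul_one]
      _ = (t ^ 2 / v ^ 2) • (UKinv F v t * (UK F v t * UE F v t) * UKinv F v t) := by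
          rw [hEK, mul_smul_comm, smul_mul_assoc]
      _ = (t ^ 2 / v ^ 2) • (UE F v t * UKinv F v t) := by
          rw [← mul_assoc, hKinvK, one_mul]
  -- the candidate images of the generators
  let G : Fin 4 → T :=
    ![tmul (UE F v t) 1 + tmul (UK F v t) (UE F v t),
      tmul 1 (UF F v t) + tmul (UF F v t) (UKinv F v t),
      tmul (UK F v t) (UK F v t),
      tmul (UKinv F v t) (UKinv F v t)]
  -- relations hold for the candidate images
  have R1 : G 2 * G 3 = 1 := by
    show tmul (UK F v t) (UK F v t) * tmul (UKinv F v t) (UKinv F v t) = 1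
    rw [hmul _ _ _ _ 0 0 pK pKinv, hKK, hone]
    simp
  have R2 : G 3 * G 2 = 1 := by
    show tmul (UKinv F v t) (UKinv F v t) * tmul (UK F v t) (UK F v t) = 1
    rw [hmul _ _ _ _ 0 0 pKinv pK, hKinvK, hone]
    simp
  have R3 : G 2 * G 0 = (v ^ 2 / t ^ 2) • (G 0 * G 2) := by
    show tmul (UK F v t) (UK F v t) * (tmul (UE F v t) 1 + tmul (UK F v t) (UE F v t))
        = (v ^ 2 / t ^ 2) • ((tmul (UE F v t) 1 + tmul (UK F v t) (UE F v t))
            * tmul (UK F v t) (UK F v t))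
    rw [mul_add, add_mul, hmul _ _ _ _ 0 1 pK pE, hmul _ _ _ _ 0 0 pK pK,
      hmul _ _ _ _ 0 0 pone pK, hmul _ _ _ _ 1 0 pE pK, hKE]
    simp only [mul_one, one_mul, map_smul, LinearMap.smul_apply, smul_add, smul_smul,
      pow_zero, mul_zero, zero_mul, one_smul, Nat.mul_zero, Nat.zero_mul]
  have R4 : G 2 * G 1 = (t ^ 2 / v ^ 2) • (G 1 * G 2) := by
    show tmul (UK F v t) (UK F v t) * (tmul 1 (UF F v t) + tmul (UF F v t) (UKinv F v t))
        = (t ^ 2 / v ^ 2) • ((tmul 1 (UF F v t) + tmul (UF F v t) (UKinv F v t))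
            * tmul (UK F v t) (UK F v t))
    rw [mul_add, add_mul, hmul _ _ _ _ 0 0 pK pone, hmul _ _ _ _ 0 1 pK pF,
      hmul _ _ _ _ 1 0 pF pK, hmul _ _ _ _ 0 0 pKinv pK, hKF, hKK, hKinvK]
    simp only [mul_one, one_mul, map_smul, LinearMap.smul_apply, smul_add, smul_smul,
      pow_zero, mul_zero, zero_mul, one_smul, Nat.mul_zero, Nat.zero_mul]
  have R5 : G 0 * G 1 - t ^ 2 • (G 1 * G 0) = (v - v⁻¹)⁻¹ • (G 2 - G 3) := by
    show (tmul (UE F v t) 1 + tmul (UK F v t) (UE F v t))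
          * (tmul 1 (UF F v t) + tmul (UF F v t) (UKinv F v t))
        - t ^ 2 • ((tmul 1 (UF F v t) + tmul (UF F v t) (UKinv F v t))
          * (tmul (UE F v t) 1 + tmul (UK F v t) (UE F v t)))
        = (v - v⁻¹)⁻¹ • (tmul (UK F v t) (UK F v t) - tmul (UKinv F v t) (UKinv F v t))
    rw [mul_add, add_mul, add_mul, mul_add, add_mul, add_mul,
      hmul _ _ _ _ 0 0 pone pone, hmul _ _ _ _ 0 1 pone pF, hmul _ _ _ _ 1 0 pE pone,
      hmul _ _ _ _ 1 1 pE pF,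
      hmul _ _ _ _ 1 1 pF pE, hmul _ _ _ _ 1 0 pF pK, hmul _ _ _ _ 0 1 pKinv pE,
      hmul _ _ _ _ 0 0 pKinv pK,
      hEF', hKF, hKinvE]
    simp only [mul_one, one_mul, map_smul, map_add, map_sub, LinearMap.smul_apply,
      LinearMap.add_apply, LinearMap.sub_apply, smul_add, smul_sub, smul_smul,
      pow_zero, mul_zero, zero_mul, one_smul, Nat.mul_zero, Nat.zero_mul, Nat.mul_one,
      pow_one]
    rw [ht]
    module
  -- the comultiplication
  have hrel : ∀ ⦃x y : FreeAlgebra F (Fin 4)⦄, URel F v t x y →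
      FreeAlgebra.lift F G x = FreeAlgebra.lift F G y := by
    intro x y h
    induction h with
    | KKinv => rw [map_mul, map_one, FreeAlgebra.lift_ι_apply, FreeAlgebra.lift_ι_apply]; exact R1
    | KinvK => rw [map_mul, map_one, FreeAlgebra.lift_ι_apply, FreeAlgebra.lift_ι_apply]; exact R2
    | KE => rw [map_mul, map_smul, map_mul]
            simp only [FreeAlgebra.lift_ι_apply]; exact R3
    | KF => rw [map_mul, map_smul, map_mul]
            simp only [FreeAlgebra.lift_ι_apply]; exact R4
    | EF => rw [map_sub, map_mul, map_smul, map_mul, map_smul, map_sub]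
            simp only [FreeAlgebra.lift_ι_apply]; exact R5
  let Δ : Uosp F v t →ₐ[F] T := RingQuot.liftAlgHom F ⟨FreeAlgebra.lift F G, hrel⟩
  have hΔ : ∀ i : Fin 4, Δ (RingQuot.mkAlgHom F (URel F v t) (FreeAlgebra.ι F i)) = G i := by
    intro i
    rw [show Δ = RingQuot.liftAlgHom F ⟨FreeAlgebra.lift F G, hrel⟩ from rfl,
      RingQuot.liftAlgHom_mkAlgHom_apply, FreeAlgebra.lift_ι_apply]
  refine ⟨Δ, ⟨hΔ 2, hΔ 3, hΔ 0, hΔ 1⟩, ?_⟩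
  rintro Δ' ⟨h1, h2, h3, h4⟩
  have key : Δ'.comp (RingQuot.mkAlgHom F (URel F v t))
      = Δ.comp (RingQuot.mkAlgHom F (URel F v t)) := by
    apply FreeAlgebra.hom_ext
    funext i
    fin_cases i
    · simpa [UE] using h3.trans (hΔ 0).symm
    · simpa [UF] using h4.trans (hΔ 1).symm
    · simpa [UK] using h1.trans (hΔ 2).symm
    · simpa [UKinv] using h2.trans (hΔ 3).symm
  apply AlgHom.ext
  intro x
  obtain ⟨y, rfl⟩ := RingQuot.mkAlgHom_surjective F (URel F v t) x
  exact AlgHom.congr_fun key y
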